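/- There exist a real number x and independent real-valued random variables Y₁, Y₂ with E[Y₁] = E[Y₂] = x such that the estimator Z defined by Z = Y₁ if |Y₁ − x| ≤ |Y₂ − x| and Z = Y₂ otherwise satisfies E[Z] ≠ x. Concretely, take x = 1/4, Y₁ equal to 1 with probability 1/4 and 0 otherwise, and Y₂ equal to 2 with probability 1/8 and 0 otherwise; then E[Z] = 1/32 ≠ 1/4. Hence selecting, per realization, the lower-error branch among individually unbiased stochastic quantizations introduces bias. -/

import Mathlib

open MeasureTheory ProbabilityTheory

noncomputable def m1 : Measure Bool :=
  (1/4 : ENNReal) • Measure.dirac true + (3/4 : ENNReal) • Measure.dirac false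

noncomputable def m2 : Measure Bool :=
  (1/8 : ENNReal) • Measure.dirac true + (7/8 : ENNReal) • Measure.dirac false

lemma m1_apply (s : Set Bool) :
    m1 s = (1/4) * s.indicator 1 true + (3/4) * s.indicator 1 false := by
  classical
  simp [m1, Measure.dirac_apply' _ (MeasurableSet.of_discrete (s := s))]

lemma m2_apply (s : Set Bool) :
    m2 s = (1/8) * s.indicator 1 true + (7/8) * s.indicator 1 false := by
  classical
  simp [m2, Measure.dirac_apply' _ (MeasurableSet.of_discrete (s := s))]

lemma ennreal_quarter : (4:ENNReal)⁻¹ + 3/4 = 1 := by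
  rw [← one_div, ENNReal.div_add_div_same]
  norm_num
  exact ENNReal.div_self (by norm_num) (by norm_num)

lemma ennreal_eighth : (8:ENNReal)⁻¹ + 7/8 = 1 := by
  rw [← one_div, ENNReal.div_add_div_same]
  norm_num
  exact ENNReal.div_self (by norm_num) (by norm_num)

instance : IsProbabilityMeasure m1 :=
  ⟨by rw [m1_apply]; simpa using ennreal_quarter⟩

instance : IsProbabilityMeasure m2 :=
  ⟨by rw [m2_apply]; simpa using ennreal_eighth⟩

noncomputable def μP : Measure (Bool × Bool) := m1.prod m2

instance : IsProbabilityMeasure μP := by unfold μP; infer_instance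

lemma indep_fst_snd : IndepFun Prod.fst Prod.snd μP := by
  rw [indepFun_iff_measure_inter_preimage_eq_mul]
  intro s t hs ht
  have h1 : (Prod.fst ⁻¹' s : Set (Bool × Bool)) = s ×ˢ Set.univ := by ext p; simp
  have h2 : (Prod.snd ⁻¹' t : Set (Bool × Bool)) = Set.univ ×ˢ t := by ext p; simp
  have h3 : (Prod.fst ⁻¹' s ∩ Prod.snd ⁻¹' t : Set (Bool × Bool)) = s ×ˢ t := by
    ext p; simp
  rw [h3, h1, h2]
  unfold μP
  rw [Measure.prod_prod, Measure.prod_prod, Measure.prod_prod,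
    measure_univ, measure_univ, mul_one, one_mul]

lemma μP_singleton (a b : Bool) : μP {(a, b)} = m1 {a} * m2 {b} := by
  have : ({(a, b)} : Set (Bool × Bool)) = ({a} : Set Bool) ×ˢ ({b} : Set Bool) := by
    ext p; simp [Prod.ext_iff]
  rw [this]; exact Measure.prod_prod _ _

lemma μP_integral (f : Bool × Bool → ℝ) :
    ∫ p, f p ∂μP = (1/32) * f (true, true) + (7/32) * f (true, false)
      + (3/32) * f (false, true) + (21/32) * f (false, false) := by
  rw [integral_fintype]
  rw [Fintype.sum_prod_type]
  simp only [Fintype.sum_bool, Measure.real, μP_singleton, m1_apply, m2_apply]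
  simp [Set.indicator]
  ring
  exact Integrable.of_finite

theorem branch_selection_introduces_bias :
    ∃ (x : ℝ) (Ω : Type) (_ : MeasurableSpace Ω) (μ : Measure Ω)
      (_ : IsProbabilityMeasure μ) (Y₁ Y₂ : Ω → ℝ),
      Measurable Y₁ ∧ Measurable Y₂ ∧ IndepFun Y₁ Y₂ μ ∧
      x = 1 / 4 ∧
      μ {ω | Y₁ ω = 1} = 1 / 4 ∧ μ {ω | Y₁ ω = 0} = 3 / 4 ∧
      μ {ω | Y₂ ω = 2} = 1 / 8 ∧ μ {ω | Y₂ ω = 0} = 7 / 8 ∧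
      (∫ ω, Y₁ ω ∂μ = x) ∧ (∫ ω, Y₂ ω ∂μ = x) ∧
      (∫ ω, (if |Y₁ ω - x| ≤ |Y₂ ω - x| then Y₁ ω else Y₂ ω) ∂μ = 1 / 32) ∧
      (1 / 32 : ℝ) ≠ x := by
  classical
  refine ⟨1/4, Bool × Bool, inferInstance, μP, inferInstance,
    (fun p => if p.1 then (1:ℝ) else 0), (fun p => if p.2 then (2:ℝ) else 0),
    ?_, ?_, ?_, rfl, ?_, ?_, ?_, ?_, ?_, ?_, ?_, by norm_num⟩
  · exact Measurable.comp
      (Measurable.of_discrete (f := fun a : Bool => if a then (1:ℝ) else 0)) measurable_fst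
  · exact Measurable.comp
      (Measurable.of_discrete (f := fun a : Bool => if a then (2:ℝ) else 0)) measurable_snd
  · exact indep_fst_snd.comp
      (Measurable.of_discrete (f := fun a : Bool => if a then (1:ℝ) else 0))
      (Measurable.of_discrete (f := fun a : Bool => if a then (2:ℝ) else 0))
  · have h : {ω : Bool × Bool | (if ω.1 then (1:ℝ) else 0) = 1}
        = ({true} : Set Bool) ×ˢ (Set.univ : Set Bool) := by
      ext ⟨a, b⟩; cases a <;> simp <;> norm_num
    rw [h]; unfold μP; rw [Measure.prod_prod, measure_univ, mul_one, m1_apply]; simp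
  · have h : {ω : Bool × Bool | (if ω.1 then (1:ℝ) else 0) = 0}
        = ({false} : Set Bool) ×ˢ (Set.univ : Set Bool) := by
      ext ⟨a, b⟩; cases a <;> simp <;> norm_num
    rw [h]; unfold μP; rw [Measure.prod_prod, measure_univ, mul_one, m1_apply]; simp
  · have h : {ω : Bool × Bool | (if ω.2 then (2:ℝ) else 0) = 2}
        = (Set.univ : Set Bool) ×ˢ ({true} : Set Bool) := by
      ext ⟨a, b⟩; cases b <;> simp <;> norm_num
    rw [h]; unfold μP; rw [Measure.prod_prod, measure_univ, one_mul, m2_apply]; simp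
  · have h : {ω : Bool × Bool | (if ω.2 then (2:ℝ) else 0) = 0}
        = (Set.univ : Set Bool) ×ˢ ({false} : Set Bool) := by
      ext ⟨a, b⟩; cases b <;> simp <;> norm_num
    rw [h]; unfold μP; rw [Measure.prod_prod, measure_univ, one_mul, m2_apply]; simp
  · rw [μP_integral]; norm_num
  · rw [μP_integral]; norm_num
  · rw [μP_integral]
    have h1 : |(3/4:ℝ)| = 3/4 := abs_of_nonneg (by norm_num)
    have h2 : |(7/4:ℝ)| = 7/4 := abs_of_nonneg (by norm_num)
    have h3 : |(1/4:ℝ)| = 1/4 := abs_of_nonneg (by norm_num)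
    norm_num [h1, h2, h3]
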